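/- Let x ∈ (0,1] and let (x_j)_{j≥1} be any binary expansion of x, i.e. x_j ∈ {0,1} for all j and x = Σ_{j=1}^∞ x_j·2^{−j}. Then x·log₂(1/x) ≤ Σ_{j=1}^∞ j·x_j·2^{−j} ≤ x·log₂(1/x) + 2x. -/

import Mathlib

/-- If `x ∈ (0,1]` and `(x_j)_{j≥1}` is a binary expansion of `x`
(here `b j` is the digit `x_{j+1}`), then
`x·log₂(1/x) ≤ Σ_{j≥1} j·x_j·2^{−j} ≤ x·log₂(1/x) + 2x`. -/
theorem binary_expansion_expected_depth_bounds
    (x : ℝ) (hx : x ∈ Set.Ioc (0 : ℝ) 1)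
    (b : ℕ → ℝ) (hb : ∀ j, b j = 0 ∨ b j = 1)
    (hexp : x = ∑' j : ℕ, b j / 2 ^ (j + 1)) :
    x * Real.logb 2 (1 / x) ≤ (∑' j : ℕ, ((j : ℝ) + 1) * b j / 2 ^ (j + 1)) ∧
      (∑' j : ℕ, ((j : ℝ) + 1) * b j / 2 ^ (j + 1)) ≤ x * Real.logb 2 (1 / x) + 2 * x := by
  obtain ⟨hx0, hx1⟩ := hx
  have hb0 : ∀ j, 0 ≤ b j := fun j => by rcases hb j with h | h <;> simp [h]
  have hb1 : ∀ j, b j ≤ 1 := fun j => by rcases hb j with h | h <;> simp [h]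
  set f : ℕ → ℝ := fun j => b j / 2 ^ (j + 1) with hf_def
  set F : ℕ → ℝ := fun j => ((j : ℝ) + 1) * b j / 2 ^ (j + 1) with hF_def
  have hf0 : ∀ j, 0 ≤ f j := fun j => by
    have h2 : (0:ℝ) < 2 ^ (j+1) := by positivity
    exact div_nonneg (hb0 j) h2.le
  -- summability facts
  have hjg : Summable (fun n : ℕ => (n : ℝ) * (1/2)^n) := by
    simpa using summable_pow_mul_geometric_of_norm_lt_one 1 (show ‖(1/2:ℝ)‖ < 1 by norm_num)
  have hjg2 : ∑' n : ℕ, (n : ℝ) * (1/2)^n = 2 := by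
    rw [tsum_coe_mul_geometric_of_norm_lt_one (by norm_num)]; norm_num
  have hgeo : Summable (fun n : ℕ => (1/2:ℝ)^n) := summable_geometric_two
  have hpow : ∀ j : ℕ, (1:ℝ) / 2 ^ (j+1) = (1/2)^(j+1) := fun j => by
    rw [div_pow, one_pow]
  have hf_le : ∀ j, f j ≤ (1/2:ℝ)^j := fun j => by
    have h1 : f j ≤ 1 / 2 ^ (j+1) := by
      simp only [hf_def]
      gcongr
      exact hb1 j
    calc f j ≤ 1 / 2 ^ (j+1) := h1
      _ = (1/2:ℝ)^(j+1) := hpow j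
      _ ≤ (1/2:ℝ)^j := pow_le_pow_of_le_one (by norm_num) (by norm_num) (Nat.le_succ j)
  have hf : Summable f := Summable.of_nonneg_of_le hf0 hf_le hgeo
  have hF0 : ∀ j, 0 ≤ F j := fun j => by
    have h2 : (0:ℝ) < 2 ^ (j+1) := by positivity
    exact div_nonneg (mul_nonneg (by positivity) (hb0 j)) h2.le
  have hshift : Summable (fun n : ℕ => ((n:ℝ)+1) * (1/2)^(n+1)) := by
    have := (summable_nat_add_iff 1).mpr hjg
    simpa using this
  have hF_le : ∀ j, F j ≤ ((j:ℝ)+1) * (1/2)^(j+1) := fun j => by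
    have h1 : F j ≤ ((j:ℝ)+1) * 1 / 2 ^ (j+1) := by
      show ((j:ℝ)+1) * b j / 2 ^ (j+1) ≤ ((j:ℝ)+1) * 1 / 2 ^ (j+1)
      gcongr
      exact hb1 j
    calc F j ≤ ((j:ℝ)+1) * 1 / 2 ^ (j+1) := h1
      _ = ((j:ℝ)+1) * (1/2)^(j+1) := by rw [mul_one, ← hpow j]; ring
  have hF : Summable F := Summable.of_nonneg_of_le hF0 hF_le hshift
  constructor
  · -- lower bound
    have hterm : ∀ j, Real.logb 2 (1/x) * f j ≤ F j := by
      intro j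
      rcases hb j with h | h
      · simp [hf_def, hF_def, h]
      · have hfx : f j ≤ x := hexp ▸ Summable.le_tsum hf j (fun m _ => hf0 m)
        have hfj : f j = 1 / 2 ^ (j+1) := by simp [hf_def, h]
        have h2 : (0:ℝ) < 2 ^ (j+1) := by positivity
        have hx2 : 1 / x ≤ 2 ^ (j+1) := by
          rw [hfj, div_le_iff₀ h2] at hfx
          rw [div_le_iff₀ hx0]
          nlinarith
        have hlog : Real.logb 2 (1/x) ≤ (j:ℝ) + 1 := by
          have := Real.logb_le_logb_of_le (by norm_num : (1:ℝ) < 2) (by positivity) hx2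
          rwa [show ((2:ℝ)^(j+1)) = (2:ℝ)^((j:ℕ)+1) from rfl, Real.logb_pow,
            Real.logb_self_eq_one (by norm_num : (1:ℝ) < 2), mul_one, Nat.cast_add,
            Nat.cast_one] at this
        calc Real.logb 2 (1/x) * f j ≤ ((j:ℝ)+1) * f j :=
              mul_le_mul_of_nonneg_right hlog (hf0 j)
          _ = F j := by
              show ((j:ℝ)+1) * (b j / 2 ^ (j+1)) = ((j:ℝ)+1) * b j / 2 ^ (j+1)
              ring
    calc x * Real.logb 2 (1/x) = Real.logb 2 (1/x) * ∑' j, f j := by rw [← hexp]; ring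
      _ = ∑' j, Real.logb 2 (1/x) * f j := (tsum_mul_left).symm
      _ ≤ ∑' j, F j := Summable.tsum_le_tsum hterm (hf.mul_left _) hF
  · -- upper bound
    have hex : ∃ j, b j = 1 := by
      by_contra h
      push_neg at h
      have hz : ∀ j, b j = 0 := fun j => (hb j).resolve_right (h j)
      have : x = 0 := by rw [hexp]; simp [hf_def, hz]
      linarith
    set k := Nat.find hex with hk_def
    have hbk : b k = 1 := Nat.find_spec hex
    have hblt : ∀ j < k, b j = 0 := fun j hj => (hb j).resolve_right (Nat.find_min hex hj)
    have hg : Summable (fun i : ℕ => f (i + k)) := (summable_nat_add_iff k).mpr hf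
    have hG : Summable (fun i : ℕ => F (i + k)) := (summable_nat_add_iff k).mpr hF
    -- x as shifted sum
    have hxs : x = ∑' i : ℕ, f (i + k) := by
      rw [hexp, ← Summable.sum_add_tsum_nat_add k hf]
      have hz : ∑ i ∈ Finset.range k, f i = 0 := by
        apply Finset.sum_eq_zero
        intro i hi
        simp only [hf_def, hblt i (Finset.mem_range.mp hi), zero_div]
      rw [hz, zero_add]
    -- geometric facts at offset k
    have hpk : ∀ i : ℕ, (1:ℝ)/2^(i+k+1) = (1/2^(k+1)) * (1/2)^i := fun i => by
      rw [div_pow, one_pow, div_mul_div_comm, one_mul, ← pow_add]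
      congr 1
      ring
    have hgk : Summable (fun i : ℕ => (1:ℝ)/2^(i+k+1)) := by
      simp_rw [hpk]
      exact hgeo.mul_left _
    have hgk_sum : ∑' i : ℕ, (1:ℝ)/2^(i+k+1) = 1/2^k := by
      simp_rw [hpk]
      rw [tsum_mul_left, tsum_geometric_two, pow_succ]
      field_simp
    have hxk : x ≤ 1/2^k := by
      rw [hxs, ← hgk_sum]
      apply Summable.tsum_le_tsum _ hg hgk
      intro i
      show b (i+k) / 2 ^ ((i+k)+1) ≤ 1 / 2^(i+k+1)
      gcongr
      exact hb1 _
    -- k ≤ logb 2 (1/x)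
    have hklog : (k:ℝ) ≤ Real.logb 2 (1/x) := by
      have h2 : (0:ℝ) < 2^k := by positivity
      have h2k : (2:ℝ)^k ≤ 1/x := by
        rw [le_div_iff₀ h2] at hxk
        rw [le_div_iff₀ hx0]
        nlinarith
      have := Real.logb_le_logb_of_le (by norm_num : (1:ℝ) < 2) (by positivity) h2k
      rwa [Real.logb_pow, Real.logb_self_eq_one (by norm_num : (1:ℝ) < 2), mul_one] at this
    -- the sum F as a shifted sum
    have hSs : ∑' j, F j = ∑' i : ℕ, F (i + k) := by
      rw [← Summable.sum_add_tsum_nat_add k hF]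
      have hz : ∑ i ∈ Finset.range k, F i = 0 := by
        apply Finset.sum_eq_zero
        intro i hi
        simp only [hF_def, hblt i (Finset.mem_range.mp hi), mul_zero, zero_div]
      rw [hz, zero_add]
    -- correction terms
    set u : ℕ → ℝ := fun i => F (i+k) - ((k:ℝ)+2) * f (i+k) with hu_def
    have hu_sum : Summable u := hG.sub (hg.mul_left _)
    set v : ℕ → ℝ := fun i => ((i:ℝ)-1) / 2^(i+k+1) with hv_def
    have hv_split : ∀ i, v i = (1/2^(k+1)) * ((i:ℝ) * (1/2)^i) - (1/2^(k+1)) * (1/2)^i := by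
      intro i
      simp only [hv_def]
      rw [sub_div, ← mul_assoc, mul_comm (1/2^(k+1)) ((i:ℝ)), mul_assoc]
      congr 1
      · rw [← hpk i]; ring
      · rw [← hpk i]
    have hveq : v = fun i : ℕ => ((1:ℝ)/2^(k+1)) * ((i:ℝ) * (1/2)^i) - ((1:ℝ)/2^(k+1)) * (1/2)^i :=
      funext hv_split
    have hv_sum : Summable v := by
      rw [hveq]
      exact (hjg.mul_left _).sub (hgeo.mul_left _)
    have hv_tsum : ∑' i, v i = 0 := by
      rw [hveq]
      rw [Summable.tsum_sub (hjg.mul_left _) (hgeo.mul_left _), tsum_mul_left, tsum_mul_left,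
        hjg2, tsum_geometric_two]
      ring
    have hui : ∀ i, u i = ((i:ℝ)-1) * b (i+k) / 2^(i+k+1) := by
      intro i
      have hcast : ((i+k:ℕ):ℝ) = (i:ℝ) + (k:ℝ) := by push_cast; ring
      simp only [hu_def, hF_def, hf_def, hcast]
      show ((i:ℝ) + (k:ℝ) + 1) * b (i+k) / 2^((i+k)+1) - ((k:ℝ)+2) * (b (i+k) / 2^((i+k)+1))
          = ((i:ℝ)-1) * b (i+k) / 2^(i+k+1)
      ring
    have huv : ∀ i, u i ≤ v i := by
      intro i
      rw [hui i]
      simp only [hv_def]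
      rcases Nat.eq_zero_or_pos i with hi | hi
      · subst hi
        simp [hbk]
      · have h1 : (1:ℝ) ≤ (i:ℝ) := by exact_mod_cast hi
        have hnum : ((i:ℝ)-1) * b (i+k) ≤ (i:ℝ)-1 := by
          nlinarith [hb1 (i+k), hb0 (i+k)]
        have h2 : (0:ℝ) < 2^(i+k+1) := by positivity
        rw [div_le_div_iff_of_pos_right h2]
        exact hnum
    -- conclude
    have hSle : ∑' j, F j ≤ ((k:ℝ)+2) * x := by
      rw [hSs]
      have hGi : ∀ i, F (i+k) = ((k:ℝ)+2) * f (i+k) + u i := fun i => by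
        simp only [hu_def]; ring
      calc ∑' i : ℕ, F (i+k) = ∑' i : ℕ, (((k:ℝ)+2) * f (i+k) + u i) := by
            exact tsum_congr hGi
        _ = ((k:ℝ)+2) * (∑' i : ℕ, f (i+k)) + ∑' i, u i := by
            rw [Summable.tsum_add (hg.mul_left _) hu_sum, tsum_mul_left]
        _ ≤ ((k:ℝ)+2) * x + 0 := by
            have h1 : ∑' i : ℕ, f (i+k) = x := hxs.symm
            have h2 : ∑' i, u i ≤ 0 := by
              rw [← hv_tsum]; exact Summable.tsum_le_tsum huv hu_sum hv_sum
            rw [h1]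
            linarith
        _ = ((k:ℝ)+2) * x := by ring
    have : ((k:ℝ)+2) * x ≤ x * Real.logb 2 (1/x) + 2 * x := by nlinarith
    linarith
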